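/- Let (X,d_X) and (Y,d_Y) be complete metric spaces equipped with line selections ω_X and ω_Y such that: for each λ ∈ ℝ the maps (x,y) ↦ ω_X(x,y,λ) and (x,y) ↦ ω_Y(x,y,λ) are jointly continuous; both line selections satisfy the composition law ω(z, ω(z,x,λ), μ) = ω(z, x, λ·μ) for all z, x and λ, μ ∈ ℝ; and all closed balls in X and in Y are convex with respect to the corresponding line selection (ω(x,y,t) lies in the ball whenever x and y do and t ∈ [0,1]). If f : X → Y is a continuous surjection satisfying f(ω_X(x,y,λ)) = ω_Y(f(x), f(y), λ) for all x, y ∈ X and all λ ∈ ℝ, then f is an open map. -/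

import Mathlib

open Metric Set


private lemma geodesic_open_mapping_aux {X Y : Type*} [MetricSpace X] [CompleteSpace X]
    [MetricSpace Y] (f : X → Y) (hf : Continuous f) (ξ : X) (ε c : ℝ)
    (hε : 0 < ε) (hc : 0 < c) (hcε : c * ε ≤ 1)
    (key : ∀ a : X, dist a ξ ≤ ε → dist (f a) (f ξ) ≤ 1 → ∀ η : ℝ, 0 < η →
      ball (f a) (c * η) ⊆ closure (f '' closedBall a η)) :
    ball (f ξ) (c * (ε / 2)) ⊆ f '' closedBall ξ ε := by
  intro y hy
  set η : ℕ → ℝ := fun k => ε / 2 * (1 / 2 : ℝ) ^ k with hηdef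
  have hηpos : ∀ k, 0 < η k := fun k => by simp only [hηdef]; positivity
  have hηle : ∀ k, η k ≤ ε / 2 := by
    intro k
    have hp : (1 / 2 : ℝ) ^ k ≤ 1 := pow_le_one₀ (by norm_num) (by norm_num)
    simp only [hηdef]
    nlinarith
  have hηsucc : ∀ k, η k + ε * (1 - (1 / 2 : ℝ) ^ k) = ε * (1 - (1 / 2 : ℝ) ^ (k + 1)) := by
    intro k
    simp only [hηdef]
    rw [pow_succ]
    ring
  have hshrink : ∀ k : ℕ, ε * (1 - (1 / 2 : ℝ) ^ k) ≤ ε := by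
    intro k
    have hpow : (0 : ℝ) ≤ ε * (1 / 2 : ℝ) ^ k := by positivity
    nlinarith [hpow]
  have hη0 : η 0 = ε / 2 := by simp [hηdef]
  have hyd : dist y (f ξ) < c * η 0 := by rw [hη0]; exact mem_ball.1 hy
  have hyd' : dist y (f ξ) ≤ 1 / 2 := by
    have h0 := hηle 0
    nlinarith
  have step : ∀ (k : ℕ) (a : X),
      dist a ξ ≤ ε * (1 - (1 / 2 : ℝ) ^ k) ∧ dist (f a) y < c * η k →
      ∃ b : X, (dist b ξ ≤ ε * (1 - (1 / 2 : ℝ) ^ (k + 1)) ∧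
        dist (f b) y < c * η (k + 1)) ∧ dist b a ≤ η k := by
    intro k a ha
    obtain ⟨ha1, ha2⟩ := ha
    have haξ : dist a ξ ≤ ε := le_trans ha1 (hshrink k)
    have hfay : dist (f a) y ≤ 1 / 2 := by
      have h0 := hηle k
      nlinarith
    have hfa : dist (f a) (f ξ) ≤ 1 := by
      calc dist (f a) (f ξ) ≤ dist (f a) y + dist y (f ξ) := dist_triangle _ _ _
        _ ≤ 1 := by linarith
    have hyin : y ∈ closure (f '' closedBall a (η k)) := by
      apply key a haξ hfa (η k) (hηpos k)
      rw [mem_ball, dist_comm]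
      exact ha2
    obtain ⟨b', hb'S, hb'd⟩ :=
      Metric.mem_closure_iff.1 hyin (c * η (k + 1)) (by have := hηpos (k + 1); positivity)
    obtain ⟨b, hb, rfl⟩ := hb'S
    have h1 : dist b a ≤ η k := mem_closedBall.1 hb
    refine ⟨b, ⟨?_, ?_⟩, h1⟩
    · calc dist b ξ ≤ dist b a + dist a ξ := dist_triangle _ _ _
        _ ≤ η k + ε * (1 - (1 / 2 : ℝ) ^ k) := by linarith
        _ = ε * (1 - (1 / 2 : ℝ) ^ (k + 1)) := hηsucc k
    · rw [dist_comm]; exact hb'd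
  choose! next hnext using step
  set u : ℕ → X := fun k => Nat.rec (motive := fun _ => X) ξ next k with hudef
  have husucc : ∀ k, u (k + 1) = next k (u k) := fun _ => rfl
  have hIk : ∀ k, dist (u k) ξ ≤ ε * (1 - (1 / 2 : ℝ) ^ k) ∧ dist (f (u k)) y < c * η k := by
    intro k
    induction k with
    | zero =>
      constructor
      · simp [hudef]
      · have h0 : u 0 = ξ := rfl
        rw [h0, dist_comm]
        exact hyd
    | succ k ih =>
      rw [husucc]
      exact (hnext k (u k) ih).1
  have hdist : ∀ k, dist (u k) (u (k + 1)) ≤ (ε / 2) * (1 / 2 : ℝ) ^ k := by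
    intro k
    have h2 := (hnext k (u k) (hIk k)).2
    rw [husucc, dist_comm]
    simpa [hηdef] using h2
  have hcauchy : CauchySeq u := cauchySeq_of_le_geometric (1 / 2) (ε / 2) (by norm_num) hdist
  obtain ⟨x, hx⟩ := cauchySeq_tendsto_of_complete hcauchy
  have hfx : f x = y := by
    have h1 : Filter.Tendsto (fun k => f (u k)) Filter.atTop (nhds (f x)) :=
      (hf.tendsto x).comp hx
    have h2 : Filter.Tendsto (fun k => f (u k)) Filter.atTop (nhds y) := by
      rw [tendsto_iff_dist_tendsto_zero]
      have hlim : Filter.Tendsto (fun k => c * η k) Filter.atTop (nhds 0) := by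
        have hgeo2 := tendsto_pow_atTop_nhds_zero_of_lt_one
          (by norm_num : (0 : ℝ) ≤ 1 / 2) (by norm_num : (1 / 2 : ℝ) < 1)
        have h3 := hgeo2.const_mul (c * (ε / 2))
        rw [mul_zero] at h3
        refine h3.congr (fun k => ?_)
        simp only [hηdef]
        ring
      exact squeeze_zero (fun k => dist_nonneg) (fun k => ((hIk k).2).le) hlim
    exact tendsto_nhds_unique h1 h2
  have hxball : x ∈ closedBall ξ ε := by
    refine IsClosed.mem_of_tendsto Metric.isClosed_closedBall hx ?_
    filter_upwards with k
    rw [mem_closedBall]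
    exact le_trans (hIk k).1 (hshrink k)
  exact ⟨x, hxball, hfx⟩

/-- Open mapping theorem for geodesic surjections of complete geodesic spaces with line
selections: joint continuity of the line selections, the composition law, and convexity
of all closed balls imply that every continuous geodesic surjection is open. -/
theorem geodesic_open_mapping {X Y : Type*} [MetricSpace X] [CompleteSpace X]
    [MetricSpace Y] [CompleteSpace Y]
    (ωX : X → X → ℝ → X)
    (hX0 : ∀ x y : X, ωX x y 0 = x) (hX1 : ∀ x y : X, ωX x y 1 = y)
    (hXd : ∀ (x y : X) (s t : ℝ), dist (ωX x y s) (ωX x y t) = |s - t| * dist x y)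
    (hXcont : ∀ l : ℝ, Continuous fun q : X × X => ωX q.1 q.2 l)
    (hXcomp : ∀ (z x : X) (l μ : ℝ), ωX z (ωX z x l) μ = ωX z x (l * μ))
    (hXball : ∀ (c : X) (ρ : ℝ), ∀ x ∈ closedBall c ρ, ∀ y ∈ closedBall c ρ,
      ∀ t ∈ Icc (0 : ℝ) 1, ωX x y t ∈ closedBall c ρ)
    (ωY : Y → Y → ℝ → Y)
    (hY0 : ∀ x y : Y, ωY x y 0 = x) (hY1 : ∀ x y : Y, ωY x y 1 = y)
    (hYd : ∀ (x y : Y) (s t : ℝ), dist (ωY x y s) (ωY x y t) = |s - t| * dist x y)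
    (hYcont : ∀ l : ℝ, Continuous fun q : Y × Y => ωY q.1 q.2 l)
    (hYcomp : ∀ (z x : Y) (l μ : ℝ), ωY z (ωY z x l) μ = ωY z x (l * μ))
    (hYball : ∀ (c : Y) (ρ : ℝ), ∀ x ∈ closedBall c ρ, ∀ y ∈ closedBall c ρ,
      ∀ t ∈ Icc (0 : ℝ) 1, ωY x y t ∈ closedBall c ρ)
    (f : X → Y) (hf : Continuous f) (hsurj : Function.Surjective f)
    (hgeo : ∀ (x y : X) (l : ℝ), f (ωX x y l) = ωY (f x) (f y) l) :
    IsOpenMap f := by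
  rcases isEmpty_or_nonempty X with hX | hX
  · intro U hU
    have hU' : U = ∅ := Set.eq_empty_of_isEmpty U
    simp [hU']
  obtain ⟨x₀⟩ := hX
  have : Nonempty Y := ⟨f x₀⟩
  -- basic distance facts
  have distX : ∀ (a x : X) (t : ℝ), dist a (ωX a x t) = |t| * dist a x := by
    intro a x t
    have h := hXd a x 0 t
    rwa [hX0, zero_sub, abs_neg] at h
  have distY : ∀ (c u : Y) (t : ℝ), dist c (ωY c u t) = |t| * dist c u := by
    intro c u t
    have h := hYd c u 0 t
    rwa [hY0, zero_sub, abs_neg] at h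
  have invY : ∀ (c u : Y) (μ : ℝ), μ ≠ 0 → ωY c (ωY c u μ⁻¹) μ = u := by
    intro c u μ hμ
    rw [hYcomp, inv_mul_cancel₀ hμ, hY1]
  -- pushing closures of images of balls through homotheties centered at points of the image
  have push : ∀ (a b : X) (μ ρ : ℝ),
      (fun u => ωY (f a) u μ) '' closure (f '' closedBall b ρ) ⊆
        closure (f '' closedBall b (dist b a + |μ| * (dist a b + ρ))) := by
    intro a b μ ρ
    have hcont : Continuous fun u : Y => ωY (f a) u μ :=
      (hYcont μ).comp (continuous_const.prodMk continuous_id)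
    refine (image_closure_subset_closure_image hcont).trans (closure_mono ?_)
    rintro _ ⟨_, ⟨x, hx, rfl⟩, rfl⟩
    refine ⟨ωX a x μ, ?_, hgeo a x μ⟩
    rw [mem_closedBall] at hx ⊢
    have hax : dist a x ≤ dist a b + ρ := by
      calc dist a x ≤ dist a b + dist b x := dist_triangle _ _ _
      _ ≤ dist a b + ρ := by rw [dist_comm b x]; linarith
    calc dist (ωX a x μ) b ≤ dist (ωX a x μ) a + dist a b := dist_triangle _ _ _
      _ = |μ| * dist a x + dist a b := by rw [dist_comm, distX]
      _ ≤ |μ| * (dist a b + ρ) + dist a b := by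
          have := abs_nonneg μ
          nlinarith
      _ = dist b a + |μ| * (dist a b + ρ) := by rw [dist_comm a b]; ring
  -- Baire category step
  obtain ⟨n, hn⟩ :=
    nonempty_interior_of_iUnion_of_closed
      (f := fun n : ℕ => closure (f '' closedBall x₀ n)) (fun _ => isClosed_closure)
      (by
        ext y
        simp only [mem_iUnion, mem_univ, iff_true]
        obtain ⟨x, rfl⟩ := hsurj y
        exact ⟨⌈dist x x₀⌉₊, subset_closure ⟨x, by simpa [mem_closedBall] using Nat.le_ceil _, rfl⟩⟩)
  obtain ⟨y₁, hy₁⟩ := hn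
  obtain ⟨r, hr, hrsub⟩ := Metric.isOpen_iff.1 isOpen_interior y₁ hy₁
  have hball : ball y₁ r ⊆ closure (f '' closedBall x₀ n) := hrsub.trans interior_subset
  obtain ⟨x₁, hx₁⟩ := hsurj y₁
  -- Lemma 1: every ball is in the closure of the image of some explicit ball around x₀
  have L1 : ∀ (w : Y) (s : ℝ), 0 < s →
      ball w s ⊆ closure (f '' closedBall x₀
        (dist x₀ x₁ + ((dist y₁ w + s) / r) * (dist x₁ x₀ + n))) := by
    intro w s hs u hu
    set μ := (dist y₁ w + s) / r with hμdef
    have hμ : 0 < μ := div_pos (add_pos_of_nonneg_of_pos dist_nonneg hs) hr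
    have hu' : dist y₁ u < μ * r := by
      have h1 : dist u w < s := mem_ball.1 hu
      have h2 : dist y₁ u ≤ dist y₁ w + dist w u := dist_triangle _ _ _
      rw [hμdef, div_mul_cancel₀ _ (ne_of_gt hr)]
      rw [dist_comm w u] at h2
      linarith
    set v := ωY y₁ u μ⁻¹ with hv
    have hvmem : v ∈ ball y₁ r := by
      rw [mem_ball, dist_comm, hv, distY, abs_of_pos (inv_pos.2 hμ)]
      calc μ⁻¹ * dist y₁ u < μ⁻¹ * (μ * r) := by
            exact mul_lt_mul_of_pos_left hu' (inv_pos.2 hμ)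
        _ = r := by field_simp
    have hvC : v ∈ closure (f '' closedBall x₀ n) := hball hvmem
    have himg : ωY (f x₁) v μ ∈ closure (f '' closedBall x₀
        (dist x₀ x₁ + |μ| * (dist x₁ x₀ + n))) := push x₁ x₀ μ n ⟨v, hvC, rfl⟩
    rw [hx₁, hv, invY y₁ u μ (ne_of_gt hμ), abs_of_pos hμ] at himg
    exact himg
  -- the scale function
  set M : X → ℝ := fun a =>
    dist x₀ x₁ + ((dist y₁ (f a) + 1) / r) * (dist x₁ x₀ + n) + dist a x₀ + 1 with hMdef
  have hM₀ : ∀ a, 0 < M a := by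
    intro a
    have h1 : 0 ≤ ((dist y₁ (f a) + 1) / r) * (dist x₁ x₀ + n) :=
      mul_nonneg (div_nonneg (by positivity) hr.le) (by positivity)
    have h2 := dist_nonneg (x := x₀) (y := x₁)
    have h3 := dist_nonneg (x := a) (y := x₀)
    simp only [hMdef]
    linarith
  -- Lemma 2: almost openness at every point, at every scale
  have L2 : ∀ (a : X) (ε : ℝ), 0 < ε →
      ball (f a) (ε / M a) ⊆ closure (f '' closedBall a ε) := by
    intro a ε hε u hu
    have hstep1 : ball (f a) 1 ⊆ closure (f '' closedBall a (M a)) := by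
      refine (L1 (f a) 1 one_pos).trans (closure_mono (image_mono ?_))
      intro x hx
      rw [mem_closedBall] at hx ⊢
      calc dist x a ≤ dist x x₀ + dist x₀ a := dist_triangle _ _ _
        _ ≤ (dist x₀ x₁ + ((dist y₁ (f a) + 1) / r) * (dist x₁ x₀ + n)) + dist x₀ a := by
            linarith
        _ ≤ M a := by rw [hMdef, dist_comm x₀ a]; linarith
    set τ := ε / M a with hτdef
    have hτ : 0 < τ := div_pos hε (hM₀ a)
    set v := ωY (f a) u τ⁻¹ with hv
    have hvmem : v ∈ ball (f a) 1 := by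
      rw [mem_ball, dist_comm, hv, distY, abs_of_pos (inv_pos.2 hτ)]
      have h1 : dist u (f a) < τ := mem_ball.1 hu
      rw [dist_comm] at h1
      calc τ⁻¹ * dist (f a) u < τ⁻¹ * τ := mul_lt_mul_of_pos_left h1 (inv_pos.2 hτ)
        _ = 1 := inv_mul_cancel₀ (ne_of_gt hτ)
    have hvC : v ∈ closure (f '' closedBall a (M a)) := hstep1 hvmem
    have himg : ωY (f a) v τ ∈ closure (f '' closedBall a
        (dist a a + |τ| * (dist a a + M a))) := push a a τ (M a) ⟨v, hvC, rfl⟩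
    have hrad : dist a a + |τ| * (dist a a + M a) = ε := by
      rw [dist_self, abs_of_pos hτ, hτdef]
      field_simp [(hM₀ a).ne']
      ring
    rw [hv, invY (f a) u τ (ne_of_gt hτ), hrad] at himg
    exact himg
  -- conclude openness
  intro U hU
  rw [Metric.isOpen_iff]
  rintro _ ⟨ξ, hξU, rfl⟩
  obtain ⟨ε₀, hε₀, hballU⟩ := Metric.isOpen_iff.1 hU ξ hξU
  set ε := ε₀ / 2 with hεdef
  have hε : 0 < ε := by positivity
  have hcb : closedBall ξ ε ⊆ U :=
    (closedBall_subset_ball (by rw [hεdef]; linarith)).trans hballU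
  -- uniform bound on M over the relevant set
  set Mmax : ℝ :=
    dist x₀ x₁ + ((dist y₁ (f ξ) + 2) / r) * (dist x₁ x₀ + n) + dist ξ x₀ + ε + 1 with hMmax
  have hMmaxpos : 0 < Mmax := by
    have h1 : 0 ≤ ((dist y₁ (f ξ) + 2) / r) * (dist x₁ x₀ + n) :=
      mul_nonneg (div_nonneg (by positivity) hr.le) (by positivity)
    have h2 := dist_nonneg (x := x₀) (y := x₁)
    have h3 := dist_nonneg (x := ξ) (y := x₀)
    simp only [hMmax]
    linarith
  have hMle : ∀ a : X, dist a ξ ≤ ε → dist (f a) (f ξ) ≤ 1 → M a ≤ Mmax := by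
    intro a h1 h2
    have t1 : dist y₁ (f a) ≤ dist y₁ (f ξ) + 1 := by
      calc dist y₁ (f a) ≤ dist y₁ (f ξ) + dist (f ξ) (f a) := dist_triangle _ _ _
        _ ≤ dist y₁ (f ξ) + 1 := by rw [dist_comm (f ξ) (f a)]; linarith
    have t2 : dist a x₀ ≤ dist ξ x₀ + ε := by
      calc dist a x₀ ≤ dist a ξ + dist ξ x₀ := dist_triangle _ _ _
        _ ≤ dist ξ x₀ + ε := by linarith
    have t3 : ((dist y₁ (f a) + 1) / r) * (dist x₁ x₀ + n) ≤
        ((dist y₁ (f ξ) + 2) / r) * (dist x₁ x₀ + n) := by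
      have hx : (0:ℝ) ≤ dist x₁ x₀ + n := by positivity
      have hdiv : (dist y₁ (f a) + 1) / r ≤ (dist y₁ (f ξ) + 2) / r :=
        (div_le_div_iff_of_pos_right hr).2 (by linarith)
      nlinarith
    simp only [hMdef, hMmax]
    linarith
  set c : ℝ := min (1 / Mmax) (1 / ε) with hcdef
  have hc : 0 < c := lt_min (by positivity) (by positivity)
  have hcε : c * ε ≤ 1 := by
    have h1 : c ≤ 1 / ε := min_le_right _ _
    calc c * ε ≤ (1 / ε) * ε := by nlinarith
      _ = 1 := by field_simp
  have key : ∀ a : X, dist a ξ ≤ ε → dist (f a) (f ξ) ≤ 1 → ∀ η : ℝ, 0 < η →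
      ball (f a) (c * η) ⊆ closure (f '' closedBall a η) := by
    intro a h1 h2 η hη
    refine (ball_subset_ball ?_).trans (L2 a η hη)
    have hMa := hM₀ a
    have hle := hMle a h1 h2
    have hcM : c ≤ 1 / M a := by
      calc c ≤ 1 / Mmax := min_le_left _ _
        _ ≤ 1 / M a := one_div_le_one_div_of_le hMa hle
    calc c * η ≤ (1 / M a) * η := by nlinarith
      _ = η / M a := by ring
  refine ⟨c * (ε / 2), by positivity, ?_⟩
  exact (geodesic_open_mapping_aux f hf ξ ε c hε hc hcε key).trans
    (Set.image_mono hcb)
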